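/- Let 𝓜 be the set of pairs (S, φ), where S is a finite subset of ℕ and φ : S → {red, blue}. Define Γ → Γ' if either S' = S ∪ {x} for some x ∉ S with φ'|_S = φ, or there exists i ∈ S with i+1 ∉ S such that S' = (S ∖ {i}) ∪ {i+1} and colors are transported along the replacement. Let ≤ be the partial order generated by these moves. Then (𝓜, ≤) is a noetherian poset, i.e., it contains no infinite antichain and no infinite strictly descending chain. -/

import Mathlib

/-- A two-colored finite subset of ℕ, encoded as a finite set of pairs `(n, color)`,
is a partial function: each element carries exactly one color. -/
def ColorFunctional (Γ : Finset (ℕ × Bool)) : Prop :=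
  ∀ n c c', (n, c) ∈ Γ → (n, c') ∈ Γ → c = c'

/-- `n` belongs to the underlying set of `Γ`. -/
def CSupp (Γ : Finset (ℕ × Bool)) (n : ℕ) : Prop := ∃ c, (n, c) ∈ Γ

/-- The moves: add a new element with an arbitrary color, or shift an element `i` to `i+1`
(keeping its color) when `i+1` is absent. -/
inductive CMove : Finset (ℕ × Bool) → Finset (ℕ × Bool) → Prop
  | add (Γ : Finset (ℕ × Bool)) (x : ℕ) (c : Bool) : ¬ CSupp Γ x →
      CMove Γ (insert (x, c) Γ)
  | shift (Γ : Finset (ℕ × Bool)) (i : ℕ) (c : Bool) : (i, c) ∈ Γ → ¬ CSupp Γ (i + 1) →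
      CMove Γ (insert (i + 1, c) (Γ.erase (i, c)))

namespace Stmt2Aux

open Relation

/-- An injective key for sorting colored elements. -/
def key (p : ℕ × Bool) : ℕ := 2 * p.1 + (if p.2 then 1 else 0)

lemma key_inj : Function.Injective key := by
  rintro ⟨a, b⟩ ⟨c, d⟩ h
  simp only [key] at h
  cases b <;> cases d <;> simp [Prod.ext_iff] at h ⊢ <;> omega

lemma fst_le_of_key_le {p q : ℕ × Bool} (h : key p ≤ key q) : p.1 ≤ q.1 := by
  rcases p with ⟨a, b⟩; rcases q with ⟨c, d⟩
  simp only [key] at h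
  cases b <;> cases d <;> simp at h <;> omega

/-- The sorting relation. -/
def kr (p q : ℕ × Bool) : Prop := key p ≤ key q

instance : DecidableRel kr := fun p q => inferInstanceAs (Decidable (key p ≤ key q))
instance : IsTrans (ℕ × Bool) kr := ⟨fun _ _ _ h1 h2 => le_trans h1 h2⟩
instance : IsAntisymm (ℕ × Bool) kr := ⟨fun _ _ h1 h2 => key_inj (le_antisymm h1 h2)⟩
instance : IsTotal (ℕ × Bool) kr := ⟨fun _ _ => le_total _ _⟩

/-- The embedding relation on colored elements. -/
def r (p q : ℕ × Bool) : Prop := p.1 ≤ q.1 ∧ p.2 = q.2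

instance : IsRefl (ℕ × Bool) r := ⟨fun _ => ⟨le_refl _, rfl⟩⟩
instance : IsTrans (ℕ × Bool) r :=
  ⟨fun _ _ _ h1 h2 => ⟨le_trans h1.1 h2.1, h1.2.trans h2.2⟩⟩
instance : IsPreorder (ℕ × Bool) r := {}

lemma pwo_r : (Set.univ : Set (ℕ × Bool)).PartiallyWellOrderedOn r := by
  have h1 : ∀ c : Bool, ((fun n => (n, c)) '' Set.univ).PartiallyWellOrderedOn r := by
    intro c
    apply Set.PartiallyWellOrderedOn.image_of_monotone_on
      (r := ((· ≤ ·) : ℕ → ℕ → Prop))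
    · exact (Set.isWF_univ_iff.2 ⟨wellFounded_lt⟩).isPWO
    · intro a _ b _ h
      exact ⟨h, rfl⟩
  have huniv : (Set.univ : Set (ℕ × Bool)) =
      ((fun n => (n, false)) '' Set.univ) ∪ ((fun n => (n, true)) '' Set.univ) := by
    ext ⟨n, c⟩
    cases c <;> simp
  rw [huniv]
  exact (h1 false).union (h1 true)

/-- Repeatedly shifting an element right through a free region. -/
lemma shift_chain (Γ : Finset (ℕ × Bool)) (i : ℕ) (c : Bool) (hmem : (i, c) ∈ Γ) :
    ∀ d : ℕ, (∀ k, i < k → k ≤ i + d → ¬ CSupp Γ k) →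
    Relation.ReflTransGen CMove Γ (insert (i + d, c) (Γ.erase (i, c))) := by
  intro d
  induction d with
  | zero =>
    intro _
    simp only [Nat.add_zero]
    rw [Finset.insert_erase hmem]
  | succ d ih =>
    intro hfree
    have h1 := ih (fun k hk1 hk2 => hfree k hk1 (by omega))
    have hnotsupp : ¬ CSupp (insert (i + d, c) (Γ.erase (i, c))) (i + d + 1) := by
      rintro ⟨e, he⟩
      rcases Finset.mem_insert.1 he with h | h
      · have : i + d + 1 = i + d := congrArg Prod.fst h
        omega
      · exact hfree (i + d + 1) (by omega) (by omega) ⟨e, Finset.mem_of_mem_erase h⟩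
    have hmove := CMove.shift _ (i + d) c (Finset.mem_insert_self _ _) hnotsupp
    have heq : (insert (i + d, c) (Γ.erase (i, c))).erase (i + d, c) = Γ.erase (i, c) := by
      apply Finset.erase_insert
      intro hmem2
      rcases Finset.mem_erase.1 hmem2 with ⟨hne, hmemΓ⟩
      rcases Nat.eq_zero_or_pos d with hd | hd
      · subst hd; exact hne rfl
      · exact hfree (i + d) (by omega) (by omega) ⟨c, hmemΓ⟩
    rw [heq] at hmove
    exact h1.trans (Relation.ReflTransGen.single hmove)

lemma shift_chain' (Γ : Finset (ℕ × Bool)) (i j : ℕ) (c : Bool) (hij : i ≤ j)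
    (hmem : (i, c) ∈ Γ) (hfree : ∀ k, i < k → k ≤ j → ¬ CSupp Γ k) :
    Relation.ReflTransGen CMove Γ (insert (j, c) (Γ.erase (i, c))) := by
  obtain ⟨d, rfl⟩ := Nat.exists_eq_add_of_le hij
  exact shift_chain Γ i c hmem d hfree

/-- Adding a strictly-descending list of fresh elements. -/
lemma add_all : ∀ (M : List (ℕ × Bool)) (E : Finset (ℕ × Bool)),
    M.Pairwise (fun p q => q.1 < p.1) →
    (∀ n, CSupp E n → ∀ p ∈ M, p.1 < n) →
    Relation.ReflTransGen CMove E (E ∪ M.toFinset)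
  | [], E, _, _ => by
    rw [List.toFinset_nil, Finset.union_empty]
  | q :: M', E, hM, hE => by
    have hfresh : ¬ CSupp E q.1 :=
      fun hc => lt_irrefl q.1 (hE q.1 hc q (List.mem_cons_self))
    have hmove : CMove E (insert q E) := by
      have h := CMove.add E q.1 q.2 hfresh
      simpa using h
    have hE' : ∀ n, CSupp (insert q E) n → ∀ p ∈ M', p.1 < n := by
      rintro n ⟨e, he⟩ p hp
      rcases Finset.mem_insert.1 he with h | h
      · have hn : n = q.1 := congrArg Prod.fst h
        subst hn
        exact (List.pairwise_cons.1 hM).1 p hp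
      · exact hE n ⟨e, h⟩ p (List.mem_cons_of_mem _ hp)
    have h2 := add_all M' (insert q E) hM.of_cons hE'
    have heq : insert q E ∪ M'.toFinset = E ∪ (q :: M').toFinset := by
      simp [List.toFinset_cons, Finset.insert_union, Finset.union_insert]
    rw [heq] at h2
    exact (Relation.ReflTransGen.single hmove).trans h2

lemma sf_bound : ∀ {L M : List (ℕ × Bool)}, List.SublistForall₂ r L M →
    ∀ p ∈ L, ∃ q ∈ M, p.1 ≤ q.1 := by
  intro L M h
  induction h with
  | nil => intro p hp; cases hp
  | cons hr _ ih =>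
    intro p hp
    rcases List.mem_cons.1 hp with rfl | hp
    · exact ⟨_, List.mem_cons_self, hr.1⟩
    · rcases ih p hp with ⟨x, hx, hle⟩
      exact ⟨x, List.mem_cons_of_mem _ hx, hle⟩
  | cons_right _ ih =>
    intro p hp
    rcases ih p hp with ⟨x, hx, hle⟩
    exact ⟨x, List.mem_cons_of_mem _ hx, hle⟩

/-- The main lemma: an `r`-embedding of strictly descending lists yields reachability,
relative to an environment `E` of elements strictly above everything in `M`. -/
lemma main : ∀ {L M : List (ℕ × Bool)}, List.SublistForall₂ r L M →
    ∀ E : Finset (ℕ × Bool),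
    L.Pairwise (fun p q => q.1 < p.1) → M.Pairwise (fun p q => q.1 < p.1) →
    (∀ n, CSupp E n → ∀ p ∈ M, p.1 < n) →
    Relation.ReflTransGen CMove (E ∪ L.toFinset) (E ∪ M.toFinset) := by
  intro L M h
  induction h with
  | nil =>
    intro E _ hM hE
    simpa using add_all _ E hM hE
  | @cons p q L' M' hr hsf ih =>
    intro E hL hM hE
    have hposL' : ∀ x ∈ L', x.1 < p.1 := (List.pairwise_cons.1 hL).1
    have hposM' : ∀ x ∈ M', x.1 < q.1 := (List.pairwise_cons.1 hM).1
    have hpE : p ∉ E := by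
      intro hp
      have h1 : q.1 < p.1 := hE p.1 ⟨p.2, by simpa using hp⟩ q (List.mem_cons_self)
      have h2 : p.1 ≤ q.1 := hr.1
      omega
    have hpL' : p ∉ L'.toFinset := by
      intro hp
      exact lt_irrefl p.1 (hposL' p (List.mem_toFinset.1 hp))
    have hmemΓ : (p.1, p.2) ∈ E ∪ (p :: L').toFinset := by
      apply Finset.mem_union_right
      simp
    have hfree : ∀ k, p.1 < k → k ≤ q.1 → ¬ CSupp (E ∪ (p :: L').toFinset) k := by
      rintro k hk1 hk2 ⟨e, he⟩
      rcases Finset.mem_union.1 he with h | h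
      · have := hE k ⟨e, h⟩ q (List.mem_cons_self)
        omega
      · rcases List.mem_cons.1 (List.mem_toFinset.1 h) with h' | h'
        · have : k = p.1 := congrArg Prod.fst h'
          omega
        · have := hposL' _ h'
          simp at this
          omega
    have step1 := shift_chain' (E ∪ (p :: L').toFinset) p.1 q.1 p.2 hr.1 hmemΓ hfree
    have herase : (E ∪ (p :: L').toFinset).erase (p.1, p.2) = E ∪ L'.toFinset := by
      have : (E ∪ (p :: L').toFinset) = E ∪ insert p L'.toFinset := by
        simp [List.toFinset_cons]
      rw [this]
      rw [show ((p.1, p.2) : ℕ × Bool) = p from rfl]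
      rw [Finset.erase_union_distrib, Finset.erase_eq_of_notMem hpE,
        Finset.erase_insert hpL']
    rw [herase] at step1
    have hq : ((q.1, p.2) : ℕ × Bool) = q := by
      rw [hr.2]
    rw [hq, ← Finset.insert_union] at step1
    have hE' : ∀ n, CSupp (insert q E) n → ∀ x ∈ M', x.1 < n := by
      rintro n ⟨e, he⟩ x hx
      rcases Finset.mem_insert.1 he with h | h
      · have hn : n = q.1 := congrArg Prod.fst h
        subst hn
        exact hposM' x hx
      · exact hE n ⟨e, h⟩ x (List.mem_cons_of_mem _ hx)
    have step2 := ih (insert q E) hL.of_cons hM.of_cons hE'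
    have heq : insert q E ∪ M'.toFinset = E ∪ (q :: M').toFinset := by
      simp [List.toFinset_cons, Finset.insert_union, Finset.union_insert]
    rw [heq] at step2
    exact step1.trans step2
  | @cons_right q L M' hsf ih =>
    intro E hL hM hE
    have hposM' : ∀ x ∈ M', x.1 < q.1 := (List.pairwise_cons.1 hM).1
    have hfresh : ¬ CSupp (E ∪ L.toFinset) q.1 := by
      rintro ⟨e, he⟩
      rcases Finset.mem_union.1 he with h | h
      · exact lt_irrefl q.1 (hE q.1 ⟨e, h⟩ q (List.mem_cons_self))
      · rcases sf_bound hsf (q.1, e) (List.mem_toFinset.1 h) with ⟨x, hx, hle⟩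
        have := hposM' x hx
        simp at hle
        omega
    have hmove : CMove (E ∪ L.toFinset) (insert q (E ∪ L.toFinset)) := by
      have h := CMove.add (E ∪ L.toFinset) q.1 q.2 hfresh
      simpa using h
    rw [← Finset.insert_union] at hmove
    have hE' : ∀ n, CSupp (insert q E) n → ∀ x ∈ M', x.1 < n := by
      rintro n ⟨e, he⟩ x hx
      rcases Finset.mem_insert.1 he with h | h
      · have hn : n = q.1 := congrArg Prod.fst h
        subst hn
        exact hposM' x hx
      · exact hE n ⟨e, h⟩ x (List.mem_cons_of_mem _ hx)
    have step2 := ih (insert q E) hL hM.of_cons hE'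
    have heq : insert q E ∪ M'.toFinset = E ∪ (q :: M').toFinset := by
      simp [List.toFinset_cons, Finset.insert_union, Finset.union_insert]
    rw [heq] at step2
    exact (Relation.ReflTransGen.single hmove).trans step2

end Stmt2Aux

/-- the poset of two-colored finite subsets of ℕ under the order generated by
the moves is noetherian (well-quasi-ordered): every infinite sequence contains `i < j`
with `Γ_i ≤ Γ_j`. -/
theorem stmt2 (f : ℕ → Finset (ℕ × Bool)) (hf : ∀ n, ColorFunctional (f n)) :
    ∃ i j, i < j ∧ Relation.ReflTransGen CMove (f i) (f j) := by
  classical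
  open Stmt2Aux in
  set g : ℕ → List (ℕ × Bool) := fun n => ((f n).sort Stmt2Aux.kr).reverse with hg
  have hto : ∀ n, (g n).toFinset = f n := by
    intro n
    rw [hg]
    simp [Finset.sort_toFinset]
  have hpair : ∀ n, (g n).Pairwise (fun p q : ℕ × Bool => q.1 < p.1) := by
    intro n
    rw [hg]
    simp only [List.pairwise_reverse]
    have hs := Finset.pairwise_sort (f n) Stmt2Aux.kr
    have hn := (Finset.sort_nodup (f n) Stmt2Aux.kr : List.Pairwise (· ≠ ·) _)
    have hcomb := (List.Pairwise.and hs hn : List.Pairwise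
      (fun p q : ℕ × Bool => Stmt2Aux.kr p q ∧ p ≠ q) ((f n).sort Stmt2Aux.kr))
    refine List.Pairwise.imp_of_mem (@fun p q hp hq hpq => ?_) hcomb
    have hpmem : p ∈ f n := (Finset.mem_sort _).1 hp
    have hqmem : q ∈ f n := (Finset.mem_sort _).1 hq
    have h1 : p.1 ≤ q.1 := Stmt2Aux.fst_le_of_key_le hpq.1
    rcases lt_or_eq_of_le h1 with h | h
    · exact h
    · exfalso
      apply hpq.2
      have hc : p.2 = q.2 := hf n p.1 p.2 q.2 (by simpa using hpmem) (by rw [h]; simpa using hqmem)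
      exact Prod.ext_iff.2 ⟨h, hc⟩
  have hpwo := Set.PartiallyWellOrderedOn.partiallyWellOrderedOn_sublistForall₂
    Stmt2Aux.r (s := Set.univ) Stmt2Aux.pwo_r
  obtain ⟨i, j, hij, hsf⟩ := hpwo (fun n => ⟨g n, fun x _ => Set.mem_univ x⟩)
  refine ⟨i, j, hij, ?_⟩
  have hmain := Stmt2Aux.main hsf ∅ (hpair i) (hpair j)
    (by rintro n ⟨e, he⟩; simp at he)
  rw [Finset.empty_union, Finset.empty_union, hto i, hto j] at hmain
  exact hmain
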